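/- The number of ordered trees with n edges (n+1 vertices) in which exactly r_i vertices have i children for each i (necessarily Σ r_i = n+1 and Σ i·r_i = n) equals (1/(n+1)) · multinomial(n+1; r_0, r_1, ..., r_n). -/

import Mathlib

/-- An ordered (plane) rooted tree. -/
inductive OTree where
  | node : List OTree → OTree

/-- Number of edges of an ordered tree. -/
def OTree.edges : OTree → ℕ
  | .node cs => cs.length + (cs.attach.map (fun c => OTree.edges c.1)).sum
  decreasing_by
    have := List.sizeOf_lt_of_mem c.2
    simp at this ⊢; omega

/-- Number of vertices of an ordered tree having exactly `i` children. -/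
def OTree.degCount (i : ℕ) : OTree → ℕ
  | .node cs => (if cs.length = i then 1 else 0) +
      (cs.attach.map (fun c => OTree.degCount i c.1)).sum
  decreasing_by
    have := List.sizeOf_lt_of_mem c.2
    simp at this ⊢; omega

namespace OT
open Nat

/-- outdegree multiset of a tree -/
def degs : OTree → Multiset ℕ
  | .node cs => (cs.length : ℕ) ::ₘ (cs.attach.map (fun c => degs c.1)).sum
  decreasing_by
    have := List.sizeOf_lt_of_mem c.2
    simp at this ⊢; omega

/-- outdegree multiset of a forest -/
def fdegs (f : List OTree) : Multiset ℕ := (f.map degs).sum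

theorem degs_node (cs : List OTree) :
    degs (OTree.node cs) = (cs.length : ℕ) ::ₘ fdegs cs := by
  rw [degs, fdegs]
  congr 1
  congr 1
  exact List.attach_map_val

theorem edges_node (cs : List OTree) :
    (OTree.node cs).edges = cs.length + (cs.map OTree.edges).sum := by
  rw [OTree.edges]
  congr 1
  congr 1
  exact List.attach_map_val

theorem degCount_node (i : ℕ) (cs : List OTree) :
    (OTree.node cs).degCount i = (if cs.length = i then 1 else 0) +
      (cs.map (OTree.degCount i)).sum := by
  rw [OTree.degCount]
  congr 1
  congr 1
  exact List.attach_map_val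

@[elab_as_elim]
theorem otree_ind (P : OTree → Prop)
    (h : ∀ cs : List OTree, (∀ c ∈ cs, P c) → P (.node cs)) : ∀ t, P t
  | .node cs => h cs (fun c hc => otree_ind P h c)
  decreasing_by
    have := List.sizeOf_lt_of_mem hc
    simp; omega

@[simp] theorem fdegs_nil : fdegs [] = 0 := rfl

@[simp] theorem fdegs_cons (t : OTree) (l : List OTree) :
    fdegs (t :: l) = degs t + fdegs l := by simp [fdegs]

@[simp] theorem fdegs_append (l1 l2 : List OTree) :
    fdegs (l1 ++ l2) = fdegs l1 + fdegs l2 := by simp [fdegs]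

theorem msum_sum (l : List (Multiset ℕ)) : l.sum.sum = (l.map Multiset.sum).sum := by
  induction l with
  | nil => simp
  | cons a l ih => simp [ih]

theorem mcount_sum (i : ℕ) (l : List (Multiset ℕ)) :
    l.sum.count i = (l.map (Multiset.count i)).sum := by
  induction l with
  | nil => simp
  | cons a l ih => simp [ih]

theorem edges_eq (t : OTree) : t.edges = (degs t).sum := by
  induction t using otree_ind with
  | h cs ih =>
    rw [edges_node, degs_node, Multiset.sum_cons]
    congr 1
    rw [fdegs, msum_sum, List.map_map]
    exact congrArg List.sum (List.map_congr_left ih)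

theorem degCount_eq (i : ℕ) (t : OTree) : t.degCount i = (degs t).count i := by
  induction t using otree_ind with
  | h cs ih =>
    rw [degCount_node, degs_node, Multiset.count_cons]
    rw [fdegs, mcount_sum, List.map_map]
    have h2 : (cs.map (OTree.degCount i)).sum = (cs.map (Multiset.count i ∘ degs)).sum :=
      congrArg List.sum (List.map_congr_left (fun c hc => ih c hc))
    rw [h2, add_comm]
    congr 1
    simp [eq_comm]

instance : Inhabited OTree := ⟨.node []⟩

def children : OTree → List OTree | .node cs => cs

/-- forests of `k` trees with outdegree multiset `m` -/
def S (k : ℕ) (m : Multiset ℕ) : Type :=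
  {f : List OTree // f.length = k ∧ fdegs f = m}

def dmap (f : List OTree) : ℕ := (children f.headI).length
def body (f : List OTree) : List OTree := children f.headI ++ f.tail
def recon (j : ℕ) (g : List OTree) : List OTree := OTree.node (g.take j) :: g.drop j

theorem fdegs_cons_node (cs rest : List OTree) :
    fdegs (OTree.node cs :: rest) = (cs.length : ℕ) ::ₘ fdegs (cs ++ rest) := by
  simp [degs_node, Multiset.cons_add]

theorem step_props (f : List OTree) (hf : f ≠ []) :
    dmap f ∈ fdegs f ∧ fdegs (body f) = (fdegs f).erase (dmap f) ∧
      (body f).length + 1 = f.length + dmap f := by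
  obtain ⟨t, rest, rfl⟩ := List.exists_cons_of_ne_nil hf
  obtain ⟨cs⟩ := t
  have h1 : dmap (OTree.node cs :: rest) = cs.length := rfl
  have h2 : body (OTree.node cs :: rest) = cs ++ rest := rfl
  rw [h1, h2, fdegs_cons_node]
  refine ⟨Multiset.mem_cons_self _ _, by rw [Multiset.erase_cons_head], ?_⟩
  simp; omega

theorem recon_body (f : List OTree) (hf : f ≠ []) : recon (dmap f) (body f) = f := by
  obtain ⟨t, rest, rfl⟩ := List.exists_cons_of_ne_nil hf
  obtain ⟨cs⟩ := t
  have h1 : dmap (OTree.node cs :: rest) = cs.length := rfl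
  have h2 : body (OTree.node cs :: rest) = cs ++ rest := rfl
  rw [h1, h2, recon, List.take_left, List.drop_left]

theorem body_recon (j : ℕ) (g : List OTree) : body (recon j g) = g := by
  simp only [recon, body, List.headI, children, List.tail]
  exact List.take_append_drop j g

/-- the equivalence giving the recursion -/
def fiberEquiv (k : ℕ) (m : Multiset ℕ) (j : ℕ) (hj : j ∈ m) :
    {f : S (k+1) m // dmap f.1 = j} ≃ S (k + j) (m.erase j) where
  toFun f := ⟨body f.1.1, by
    obtain ⟨⟨f, hlen, hdeg⟩, hd⟩ := f
    dsimp only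
    have hne : f ≠ [] := by intro h; rw [h] at hlen; simp at hlen
    obtain ⟨h1, h2, h3⟩ := step_props f hne
    simp only at hd
    constructor
    · omega
    · rw [h2, hdeg, hd]⟩
  invFun g := ⟨⟨recon j g.1, by
    obtain ⟨g, hlen, hdeg⟩ := g
    have hjle : j ≤ g.length := by omega
    constructor
    · simp only [recon, List.length_cons, List.length_drop]; omega
    · have : (g.take j).length = j := by simp [hjle]
      rw [recon, fdegs_cons_node, this, List.take_append_drop, hdeg,
        Multiset.cons_erase hj]⟩, by
    obtain ⟨g, hlen, hdeg⟩ := g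
    have hjle : j ≤ g.length := by omega
    show dmap (recon j g) = j
    simp [dmap, recon, children, List.headI, hjle]⟩
  left_inv f := by
    obtain ⟨⟨f, hlen, hdeg⟩, hd⟩ := f
    have hne : f ≠ [] := by intro h; rw [h] at hlen; simp at hlen
    apply Subtype.ext; apply Subtype.ext
    simp only at hd ⊢
    rw [← hd, recon_body f hne]
  right_inv g := by
    apply Subtype.ext
    exact body_recon j g.1

theorem finite_S (m : Multiset ℕ) : ∀ k : ℕ, Finite (S k m) := by
  induction m using Multiset.strongInductionOn with
  | ih m IH =>
  intro k
  match k with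
  | 0 =>
    have : Subsingleton (S 0 m) := ⟨by
      rintro ⟨f, hf, _⟩ ⟨g, hg, _⟩
      apply Subtype.ext
      rw [List.length_eq_zero_iff] at hf hg
      subst hf; subst hg; rfl⟩
    exact Finite.of_subsingleton
  | k+1 =>
    haveI : ∀ j : {j // j ∈ m.toFinset}, Finite (S (k + j.1) (m.erase j.1)) := fun j =>
      IH _ (Multiset.erase_lt.mpr (Multiset.mem_toFinset.mp j.2)) _
    have hmem : ∀ f : S (k+1) m, dmap f.1 ∈ m.toFinset := by
      rintro ⟨f, hlen, hdeg⟩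
      have hne : f ≠ [] := by intro h; rw [h] at hlen; simp at hlen
      obtain ⟨h1, _, _⟩ := step_props f hne
      exact Multiset.mem_toFinset.mpr (hdeg ▸ h1)
    apply Finite.of_injective
      (fun f : S (k+1) m =>
        (⟨⟨dmap f.1, hmem f⟩,
          ⟨body f.1, by
            obtain ⟨f, hlen, hdeg⟩ := f
            have hne : f ≠ [] := by intro h; rw [h] at hlen; simp at hlen
            obtain ⟨h1, h2, h3⟩ := step_props f hne
            refine ⟨?_, ?_⟩
            · show (body f).length = k + dmap f
              omega
            · show fdegs (body f) = m.erase (dmap f)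
              rw [h2, hdeg]⟩⟩ :
          Σ j : {j // j ∈ m.toFinset}, S (k + j.1) (m.erase j.1)))
    intro f g h
    have h1 : dmap f.1 = dmap g.1 := congrArg (fun p => p.1.1) h
    have h2 : body f.1 = body g.1 := congrArg (fun p => p.2.1) h
    have hnef : f.1 ≠ [] := by
      intro hh; have := f.2.1; rw [hh] at this; simp at this
    have hneg : g.1 ≠ [] := by
      intro hh; have := g.2.1; rw [hh] at this; simp at this
    apply Subtype.ext
    rw [← recon_body f.1 hnef, ← recon_body g.1 hneg, h1, h2]

theorem card_S_succ (k : ℕ) (m : Multiset ℕ) :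
    Nat.card (S (k+1) m) = ∑ j ∈ m.toFinset, Nat.card (S (k + j) (m.erase j)) := by
  classical
  haveI := finite_S m (k+1)
  have hmem : ∀ f : S (k+1) m, dmap f.1 ∈ m.toFinset := by
    rintro ⟨f, hlen, hdeg⟩
    have hne : f ≠ [] := by intro h; rw [h] at hlen; simp at hlen
    obtain ⟨h1, _, _⟩ := step_props f hne
    exact Multiset.mem_toFinset.mpr (hdeg ▸ h1)
  let d : S (k+1) m → {j // j ∈ m.toFinset} := fun f => ⟨dmap f.1, hmem f⟩
  rw [Nat.card_congr (Equiv.sigmaFiberEquiv d).symm]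
  haveI : ∀ j : {j // j ∈ m.toFinset}, Finite {f : S (k+1) m // d f = j} := fun j =>
    Subtype.finite
  haveI : ∀ j : {j // j ∈ m.toFinset}, Fintype {f : S (k+1) m // d f = j} := fun j =>
    Fintype.ofFinite _
  rw [Nat.card_eq_fintype_card, Fintype.card_sigma]
  rw [← Finset.sum_coe_sort m.toFinset (fun j => Nat.card (S (k + j) (m.erase j)))]
  apply Finset.sum_congr rfl
  intro j _
  rw [← Nat.card_eq_fintype_card]
  refine Nat.card_congr ?_
  refine (Equiv.subtypeEquivRight (q := fun f => dmap f.1 = j.1) ?_).trans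
    (fiberEquiv k m j.1 (Multiset.mem_toFinset.mp j.2))
  intro f
  simp only [d, Subtype.ext_iff]

theorem card_S_zero_zero : Nat.card (S 0 0) = 1 := by
  haveI : Unique (S 0 0) := {
    default := ⟨[], by simp⟩
    uniq := by
      rintro ⟨f, hf, _⟩
      apply Subtype.ext
      simpa using List.length_eq_zero_iff.mp hf }
  exact Nat.card_unique

theorem card_S_zero_ne (m : Multiset ℕ) (hm : m ≠ 0) : Nat.card (S 0 m) = 0 := by
  haveI : IsEmpty (S 0 m) := ⟨by
    rintro ⟨f, hf, hdeg⟩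
    rw [List.length_eq_zero_iff] at hf
    exact hm (by rw [← hdeg, hf]; rfl)⟩
  exact Nat.card_of_isEmpty

theorem P_erase (m : Multiset ℕ) (j : ℕ) (hj : j ∈ m) :
    ∏ i ∈ m.toFinset, (m.count i)! =
      m.count j * ∏ i ∈ (m.erase j).toFinset, ((m.erase j).count i)! := by
  classical
  have hsub : (m.erase j).toFinset ⊆ m.toFinset :=
    Multiset.toFinset_subset.mpr (Multiset.subset_of_le (Multiset.erase_le j m))
  have h1 : ∏ i ∈ (m.erase j).toFinset, ((m.erase j).count i)! =
      ∏ i ∈ m.toFinset, ((m.erase j).count i)! := by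
    apply Finset.prod_subset hsub
    intro x _ hx
    rw [Multiset.count_eq_zero_of_notMem (fun h => hx (Multiset.mem_toFinset.mpr h))]
    rfl
  rw [h1]
  have hjF : j ∈ m.toFinset := Multiset.mem_toFinset.mpr hj
  rw [← Finset.mul_prod_erase _ _ hjF, ← Finset.mul_prod_erase _ _ hjF, ← mul_assoc]
  congr 1
  · rw [Multiset.count_erase_self, ← Nat.mul_factorial_pred (Multiset.count_pos.mpr hj).ne']
  · apply Finset.prod_congr rfl
    intro x hx
    rw [Multiset.count_erase_of_ne (Finset.ne_of_mem_erase hx)]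

theorem main_count : ∀ (m : Multiset ℕ) (k : ℕ), Multiset.card m = m.sum + k →
    (m.sum + k) * ((∏ i ∈ m.toFinset, (m.count i)!) * Nat.card (S k m))
      = k * (Multiset.card m)! := by
  intro m
  induction m using Multiset.strongInductionOn with
  | ih m IH =>
  intro k hk
  match k with
  | 0 =>
    rcases eq_or_ne m 0 with rfl | hm
    · simp
    · rw [card_S_zero_ne m hm]
      simp
  | k+1 =>
    have hm : m ≠ 0 := by
      rintro rfl
      simp at hk
    have hcpos : 1 ≤ Multiset.card m := by
      rw [hk]; omega
    rw [card_S_succ]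
    have key : ∀ j ∈ m.toFinset,
        (m.sum + k) * ((∏ i ∈ m.toFinset, (m.count i)!) * Nat.card (S (k+j) (m.erase j)))
          = m.count j * ((k + j + 1 - 1) * (Multiset.card m - 1)!) := by
      intro j hjF
      have hj : j ∈ m := Multiset.mem_toFinset.mp hjF
      have hcard : Multiset.card (m.erase j) = Multiset.card m - 1 := by
        rw [Multiset.card_erase_of_mem hj]; rfl
      have hsum : (m.erase j).sum + j = m.sum := by
        conv_rhs => rw [← Multiset.cons_erase hj]
        rw [Multiset.sum_cons]; ring
      have hcond : Multiset.card (m.erase j) = (m.erase j).sum + (k + j) := by omega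
      have hIH := IH (m.erase j) (Multiset.erase_lt.mpr hj) (k + j) hcond
      have e1 : (m.erase j).sum + (k + j) = m.sum + k := by omega
      rw [e1, hcard] at hIH
      rw [P_erase m j hj]
      calc (m.sum + k) * ((m.count j * ∏ i ∈ (m.erase j).toFinset, ((m.erase j).count i)!) *
              Nat.card (S (k+j) (m.erase j)))
          = m.count j * ((m.sum + k) * ((∏ i ∈ (m.erase j).toFinset, ((m.erase j).count i)!) *
              Nat.card (S (k+j) (m.erase j)))) := by ring
        _ = m.count j * ((k + j) * (Multiset.card m - 1)!) := by rw [hIH]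
        _ = m.count j * ((k + j + 1 - 1) * (Multiset.card m - 1)!) := by
              have : k + j + 1 - 1 = k + j := by omega
              rw [this]
    rcases Nat.eq_zero_or_pos (m.sum + k) with h0 | hpos
    · -- base case : m = {0}, k = 0
      have hs0 : m.sum = 0 := by omega
      have hk0 : k = 0 := by omega
      have hc1 : Multiset.card m = 1 := by omega
      obtain ⟨a, rfl⟩ := Multiset.card_eq_one.mp hc1
      have ha : a = 0 := by simpa using hs0
      subst ha; subst hk0
      simp [card_S_zero_zero, Multiset.erase_singleton]
    · apply Nat.eq_of_mul_eq_mul_left hpos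
      calc (m.sum + k) * ((m.sum + (k+1)) * ((∏ i ∈ m.toFinset, (m.count i)!) *
              ∑ j ∈ m.toFinset, Nat.card (S (k + j) (m.erase j))))
          = (m.sum + (k+1)) * ∑ j ∈ m.toFinset,
              (m.sum + k) * ((∏ i ∈ m.toFinset, (m.count i)!) *
                Nat.card (S (k + j) (m.erase j))) := by
            rw [← Finset.mul_sum, ← Finset.mul_sum]
            ring
        _ = (m.sum + (k+1)) * ∑ j ∈ m.toFinset,
              m.count j * ((k + j + 1 - 1) * (Multiset.card m - 1)!) := by
            rw [Finset.sum_congr rfl key]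
        _ = (m.sum + (k+1)) * ((k * Multiset.card m + m.sum) * (Multiset.card m - 1)!) := by
            congr 1
            have step : ∀ j ∈ m.toFinset, m.count j * ((k + j + 1 - 1) * (Multiset.card m - 1)!)
                = (m.count j * k + m.count j * j) * (Multiset.card m - 1)! := by
              intro j _
              have : k + j + 1 - 1 = k + j := by omega
              rw [this]; ring
            rw [Finset.sum_congr rfl step, ← Finset.sum_mul]
            congr 1
            rw [Finset.sum_add_distrib]
            congr 1
            · rw [← Finset.sum_mul, Multiset.toFinset_sum_count_eq, Nat.mul_comm]
            · conv_rhs => rw [Finset.sum_multiset_count m]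
              apply Finset.sum_congr rfl
              intro j _
              rw [smul_eq_mul]
        _ = (m.sum + k) * ((k+1) * (Multiset.card m)!) := by
            rw [← Nat.mul_factorial_pred (by omega : Multiset.card m ≠ 0)]
            have hc : Multiset.card m = m.sum + k + 1 := hk
            rw [hc]
            ring

theorem le_sum_of_mem {i : ℕ} {m : Multiset ℕ} (h : i ∈ m) : i ≤ m.sum := by
  obtain ⟨m', rfl⟩ := Multiset.exists_cons_of_mem h
  simp

end OT

open OT

/-- The number of ordered trees with `n` edges in which exactly `rᵢ` vertices
have `i` children (where `∑ rᵢ = n+1` and `∑ i·rᵢ = n`) is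
`(1/(n+1))·multinomial(n+1; r₀, r₁, …, rₙ)`. -/
theorem card_orderedTrees_outdegreeSequence (n : ℕ) (r : ℕ → ℕ)
    (hv : ∑ i ∈ Finset.range (n + 1), r i = n + 1)
    (he : ∑ i ∈ Finset.range (n + 1), i * r i = n) :
    (Nat.card {t : OTree // t.edges = n ∧ ∀ i ≤ n, t.degCount i = r i} : ℚ) =
      (1 / (n + 1 : ℚ)) * Nat.multinomial (Finset.range (n + 1)) r := by
  classical
  set m : Multiset ℕ := ∑ i ∈ Finset.range (n + 1), Multiset.replicate (r i) i with hm
  have hcount : ∀ i ∈ Finset.range (n+1), m.count i = r i := by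
    intro i hi
    rw [hm, Multiset.count_sum']
    rw [Finset.sum_eq_single i]
    · rw [Multiset.count_replicate_self]
    · intro b _ hb
      rw [Multiset.count_replicate, if_neg hb]
    · intro h; exact absurd hi h
  have hcount0 : ∀ i, n < i → m.count i = 0 := by
    intro i hi
    rw [hm, Multiset.count_sum']
    apply Finset.sum_eq_zero
    intro b hb
    rw [Multiset.count_replicate, if_neg]
    rintro rfl
    rw [Finset.mem_range] at hb
    omega
  have hcard : Multiset.card m = n + 1 := by
    rw [hm]
    rw [show Multiset.card (∑ i ∈ Finset.range (n + 1), Multiset.replicate (r i) i)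
        = ∑ i ∈ Finset.range (n + 1), r i from ?_, hv]
    induction (Finset.range (n+1)) using Finset.cons_induction with
    | empty => simp
    | cons a s ha ih => simp [ih]
  have hsum : m.sum = n := by
    rw [hm]
    rw [show (∑ i ∈ Finset.range (n + 1), Multiset.replicate (r i) i).sum
        = ∑ i ∈ Finset.range (n + 1), i * r i from ?_, he]
    induction (Finset.range (n+1)) using Finset.cons_induction with
    | empty => simp
    | cons a s ha ih =>
        rw [Finset.sum_cons, Finset.sum_cons, Multiset.sum_add, ih,
          Multiset.sum_replicate, smul_eq_mul]
        ring
  have hsub : m.toFinset ⊆ Finset.range (n+1) := by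
    intro i hi
    rw [Multiset.mem_toFinset] at hi
    rw [Finset.mem_range]
    by_contra h
    have := hcount0 i (by omega)
    rw [← Multiset.count_pos] at hi
    omega
  have hPm : ∏ i ∈ m.toFinset, (m.count i).factorial
      = ∏ i ∈ Finset.range (n+1), (r i).factorial := by
    calc ∏ i ∈ m.toFinset, (m.count i).factorial
        = ∏ i ∈ m.toFinset, (r i).factorial :=
          Finset.prod_congr rfl (fun i hi => by rw [hcount i (hsub hi)])
      _ = ∏ i ∈ Finset.range (n+1), (r i).factorial := by
          apply Finset.prod_subset hsub
          intro x hx hnx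
          have h0 : m.count x = 0 :=
            Multiset.count_eq_zero_of_notMem (fun h => hnx (Multiset.mem_toFinset.mpr h))
          rw [← hcount x hx, h0]
          rfl
  have hiff : ∀ t : OTree, (t.edges = n ∧ ∀ i ≤ n, t.degCount i = r i) ↔ degs t = m := by
    intro t
    constructor
    · rintro ⟨he', hd⟩
      ext i
      rcases le_or_gt i n with hi | hi
      · rw [← degCount_eq, hd i hi, hcount i (Finset.mem_range.mpr (by omega))]
      · rw [hcount0 i hi]
        by_contra h
        have hmem : i ∈ degs t := by
          rw [← Multiset.count_pos]; omega
        have := le_sum_of_mem hmem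
        rw [← edges_eq, he'] at this
        omega
    · intro h
      refine ⟨by rw [edges_eq, h, hsum], fun i hi => ?_⟩
      rw [degCount_eq, h, hcount i (Finset.mem_range.mpr (by omega))]
  have hequiv : {t : OTree // t.edges = n ∧ ∀ i ≤ n, t.degCount i = r i} ≃ S 1 m := by
    refine (Equiv.subtypeEquivRight hiff).trans ?_
    exact {
      toFun := fun t => ⟨[t.1], by simp [fdegs, t.2]⟩
      invFun := fun f => ⟨f.1.headI, by
        obtain ⟨f, hlen, hdeg⟩ := f
        obtain ⟨a, rfl⟩ := List.length_eq_one_iff.mp hlen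
        simpa [fdegs] using hdeg⟩
      left_inv := fun t => Subtype.ext rfl
      right_inv := fun f => by
        apply Subtype.ext
        obtain ⟨f, hlen, hdeg⟩ := f
        obtain ⟨a, rfl⟩ := List.length_eq_one_iff.mp hlen
        rfl }
  rw [Nat.card_congr hequiv]
  have hmain := main_count m 1 (by rw [hcard, hsum])
  rw [hsum, hPm, hcard, one_mul] at hmain
  have hspec := Nat.multinomial_spec (Finset.range (n+1)) r
  rw [hv] at hspec
  have hprodpos : 0 < ∏ i ∈ Finset.range (n+1), (r i).factorial :=
    Finset.prod_pos (fun i _ => Nat.factorial_pos _)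
  have hNe : (n+1) * Nat.card (S 1 m) = Nat.multinomial (Finset.range (n+1)) r := by
    apply Nat.eq_of_mul_eq_mul_left hprodpos
    calc (∏ i ∈ Finset.range (n+1), (r i).factorial) * ((n+1) * Nat.card (S 1 m))
        = (n + 1) * ((∏ i ∈ Finset.range (n+1), (r i).factorial) * Nat.card (S 1 m)) := by ring
      _ = (n+1).factorial := hmain
      _ = (∏ i ∈ Finset.range (n+1), (r i).factorial) *
            Nat.multinomial (Finset.range (n+1)) r := hspec.symm
  have hq := congrArg (fun x : ℕ => (x : ℚ)) hNe
  push_cast at hq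
  have hne : ((n : ℚ) + 1) ≠ 0 := by positivity
  rw [← hq]
  field_simp
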